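/- Let A and B be max-plus automata over the same finite alphabet Σ with A deterministic and f_B(v) ∈ ℕ for all words v. Let t be a factorisation tree on a word w containing a fault, let ν₁ be a fault of maximal height, ν_{h+1} the parent of ν_h for each h, and ν_m the root, and let β be the associated labelling. Then for all h ∈ {2,…,m}: bar(β(ν_h)) = α(ν_h), and writing β(ν_h) = (p,x,q,M), one has x = ∞ and M_{i,j} ≤ 1 for all (i,j) ∈ C_{ν_h}. In particular β(ν_m) is a witness of non-domination in I_{A,B}. -/

import Mathlib

open scoped Classical

/-! ### Max-plus automata -/

/-- A max-plus automaton over alphabet `Sigma` with states `Q`: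
a transition matrix for each letter, an initial row vector and a final column vector,
all with entries in `ℕmax = ℕ ∪ {-∞}`, represented as `WithBot ℕ`. -/
structure MPA (Sigma : Type) (Q : Type) where
  M : Sigma → Q → Q → WithBot ℕ
  I : Q → WithBot ℕ
  F : Q → WithBot ℕ

namespace MPA

variable {Sigma Q : Type}

/-- The matrix of a word, i.e. the product `M(w₁) ⊗ ⋯ ⊗ M(w_k)` over the
max-plus semiring. -/
def mword [Fintype Q] [DecidableEq Q] (A : MPA Sigma Q) : List Sigma → Q → Q → WithBot ℕ
  | [] => fun p q => if p = q then ((0 : ℕ) : WithBot ℕ) else ⊥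
  | a :: w => fun p q => Finset.univ.sup fun r => A.M a p r + A.mword w r q

/-- The weighting function computed by a max-plus automaton:
`f_A(w) = I ⊗ M(w) ⊗ F`. -/
def func [Fintype Q] [DecidableEq Q] (A : MPA Sigma Q) (w : List Sigma) : WithBot ℕ :=
  Finset.univ.sup fun p => Finset.univ.sup fun q => A.I p + A.mword w p q + A.F q

/-- `A` is deterministic: at most one non-`-∞` entry in `I`,
and at most one non-`-∞` entry in each row of each `M(a)`. -/
def Deterministic (A : MPA Sigma Q) : Prop :=
  (∀ p q, A.I p ≠ ⊥ → A.I q ≠ ⊥ → p = q) ∧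
    ∀ a p q r, A.M a p q ≠ ⊥ → A.M a p r ≠ ⊥ → q = r

end MPA

/-- `A` is big-O of `B`: there is `c ≥ 1` with `f_A(w) ≤ c·f_B(w) + c` for all `w`. -/
def BigO {Sigma Q1 Q2 : Type} [Fintype Q1] [DecidableEq Q1] [Fintype Q2] [DecidableEq Q2]
    (A : MPA Sigma Q1) (B : MPA Sigma Q2) : Prop :=
  ∃ c : ℕ, 1 ≤ c ∧ ∀ w : List Sigma, A.func w ≤ c • B.func w + (c : WithBot ℕ)

/-! ### The semiring Ω = {-∞, 0, 1, ∞} -/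

/-- The four-element semiring `Ω = ({-∞,0,1,∞}, max, +)`. -/
inductive OSR : Type
  | bot | zero | one | inf
  deriving DecidableEq

namespace OSR

def rank : OSR → ℕ
  | bot => 0 | zero => 1 | one => 2 | inf => 3

instance : LE OSR := ⟨fun a b => a.rank ≤ b.rank⟩
instance : LT OSR := ⟨fun a b => a.rank < b.rank⟩

/-- The max operation of `Ω`, given by the order `-∞ < 0 < 1 < ∞`. -/
def sup (a b : OSR) : OSR := if a.rank ≤ b.rank then b else a

/-- The sum operation of `Ω`. -/
def add : OSR → OSR → OSR
  | bot, _ => bot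
  | _, bot => bot
  | zero, x => x
  | x, zero => x
  | one, one => one
  | one, inf => inf
  | inf, one => inf
  | inf, inf => inf

/-- Stabilisation on `Ω`. -/
def sharp : OSR → OSR
  | bot => bot | zero => zero | one => inf | inf => inf

/-- Projection into `Ω̄ = {-∞,0,1}`. -/
def bar : OSR → OSR
  | bot => bot | zero => zero | one => one | inf => one

end OSR

/-- Max of a finite family in `Ω`. -/
def osum {n : ℕ} (f : Fin n → OSR) : OSR :=
  (List.finRange n).foldr (fun j acc => OSR.sup (f j) acc) OSR.bot

/-- Product of matrices over `Ω`. -/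
def omul {n : ℕ} (M N : Fin n → Fin n → OSR) : Fin n → Fin n → OSR :=
  fun i k => osum fun j => OSR.add (M i j) (N j k)

/-- Entrywise projection of a matrix into `Ω̄`. -/
def obar {n : ℕ} (M : Fin n → Fin n → OSR) : Fin n → Fin n → OSR :=
  fun i j => (M i j).bar

/-- Projection of `ℕmax` into `Ω̄ ⊆ Ω`: `-∞ ↦ -∞`, `0 ↦ 0`, positive ↦ `1`. -/
def barW (x : WithBot ℕ) : OSR :=
  WithBot.recBotCoe OSR.bot (fun n => if n = 0 then OSR.zero else OSR.one) x

/-- Projection of `ℕ` into `Ω̄`. -/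
def barNat (n : ℕ) : OSR := if n = 0 then OSR.zero else OSR.one

/-! ### The semigroups `I_{Q,i}` and their operations -/

/-- A (non-`⊥`) element `(p, x, q, M)` of the semigroup `I_{Q,n}`. -/
structure Elem (QA : Type) (n : ℕ) where
  p : QA
  x : OSR
  q : QA
  M : Fin n → Fin n → OSR

/-- Product of two elements (assuming endpoint compatibility). -/
def eprod {QA : Type} {n : ℕ} (e f : Elem QA n) : Elem QA n :=
  ⟨e.p, e.x.add f.x, f.q, omul e.M f.M⟩

/-- The product in `I_{Q,n}` with `⊥` (`none` is `⊥`). -/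
def omulO {QA : Type} {n : ℕ} [DecidableEq QA] :
    Option (Elem QA n) → Option (Elem QA n) → Option (Elem QA n)
  | some e, some f => if e.q = f.p then some (eprod e f) else none
  | _, _ => none

/-- `(p,x,q,M)` is path-idempotent: `p = q` and `bar(M)` is idempotent. -/
def pathIdem {QA : Type} {n : ℕ} (e : Elem QA n) : Prop :=
  e.p = e.q ∧ omul (obar e.M) (obar e.M) = obar e.M

/-- `M` with all diagonal entries replaced by their stabilisation. -/
def mdiagSharp {n : ℕ} (M : Fin n → Fin n → OSR) : Fin n → Fin n → OSR :=
  fun i j => if i = j then (M i j).sharp else M i j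

/-- Stabilisation of a (path-idempotent) matrix: `M^# = M ⊗ M' ⊗ M`. -/
def mstab {n : ℕ} (M : Fin n → Fin n → OSR) : Fin n → Fin n → OSR :=
  omul (omul M (mdiagSharp M)) M

/-- Stabilisation of a (path-idempotent) element. -/
def estab {QA : Type} {n : ℕ} (e : Elem QA n) : Elem QA n :=
  ⟨e.p, e.x.sharp, e.p, mstab e.M⟩

/-- `⟨N⟩`: all off-diagonal entries replaced by their bar. -/
def mangle {n : ℕ} (M : Fin n → Fin n → OSR) : Fin n → Fin n → OSR :=
  fun i j => if i = j then M i j else (M i j).bar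

/-- Flattening of a (path-idempotent) matrix: `M^♭ = bar(M) ⊗ ⟨M³⟩ ⊗ bar(M)`. -/
def mflat {n : ℕ} (M : Fin n → Fin n → OSR) : Fin n → Fin n → OSR :=
  omul (obar M) (omul (mangle (omul M (omul M M))) (obar M))

/-- Flattening of a (path-idempotent) element. -/
def eflat {QA : Type} {n : ℕ} (e : Elem QA n) : Elem QA n :=
  ⟨e.p, e.x, e.p, mflat e.M⟩

/-- Componentwise projection of an element to `Ω̄`. -/
def ebar {QA : Type} {n : ℕ} (e : Elem QA n) : Elem QA n :=
  ⟨e.p, e.x.bar, e.q, obar e.M⟩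

/-! ### Semigroup of paths and of asymptotic behaviours -/

/-- Generators: `(p, bar x, q, bar (M_B(a)))` for each transition `p →^{a:x} q` of `A`
with `x ≠ -∞`. -/
def IsGen {Sigma QA : Type} {nB : ℕ} (A : MPA Sigma QA) (B : MPA Sigma (Fin nB))
    (e : Elem QA nB) : Prop :=
  ∃ (a : Sigma) (p q : QA) (x : ℕ), A.M a p q = ((x : ℕ) : WithBot ℕ) ∧
    e = ⟨p, barNat x, q, fun i j => barW (B.M a i j)⟩

/-- The semigroup of paths `S̄_{A,B}` (as a subset of `Ī_{Q_A,|Q_B|}`, including `⊥`):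
generated by the generators under the product. -/
inductive InPathsO {Sigma QA : Type} {nB : ℕ} [DecidableEq QA]
    (A : MPA Sigma QA) (B : MPA Sigma (Fin nB)) : Option (Elem QA nB) → Prop
  | gen : ∀ e, IsGen A B e → InPathsO A B (some e)
  | mul : ∀ x y, InPathsO A B x → InPathsO A B y → InPathsO A B (omulO x y)

/-- The semigroup of asymptotic behaviours `I_{A,B}`: generated by the generators and
closed under product, stabilisation and flattening. -/
inductive InAsympO {Sigma QA : Type} {nB : ℕ} [DecidableEq QA]
    (A : MPA Sigma QA) (B : MPA Sigma (Fin nB)) : Option (Elem QA nB) → Prop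
  | gen : ∀ e, IsGen A B e → InAsympO A B (some e)
  | mul : ∀ x y, InAsympO A B x → InAsympO A B y → InAsympO A B (omulO x y)
  | stab : ∀ e, InAsympO A B (some e) → pathIdem e → InAsympO A B (some (estab e))
  | flat : ∀ e, InAsympO A B (some e) → pathIdem e → InAsympO A B (some (eflat e))

/-- The cardinality `|S̄_{A,B}|` of the semigroup of paths. -/
noncomputable def sizeS {Sigma QA : Type} {nB : ℕ} [DecidableEq QA]
    (A : MPA Sigma QA) (B : MPA Sigma (Fin nB)) : ℕ :=
  Set.ncard {x : Option (Elem QA nB) | InPathsO A B x}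

/-- `(p,x,q,M)` is a witness of non-domination: `p` initial in `A`, `q` final in `A`,
`x = ∞` and `bar(I_B) ⊗ M ⊗ bar(F_B) < ∞`. -/
def IsWitness {Sigma QA : Type} {nB : ℕ} (A : MPA Sigma QA) (B : MPA Sigma (Fin nB))
    (e : Elem QA nB) : Prop :=
  A.I e.p ≠ ⊥ ∧ A.F e.q ≠ ⊥ ∧ e.x = OSR.inf ∧
    osum (fun i => osum fun j =>
      OSR.add (barW (B.I i)) (OSR.add (e.M i j) (barW (B.F j)))) ≠ OSR.inf

/-! ### Tractable witnesses -/

/-- Membership of an extended element (`none` is the adjoined identity `𝟙`) in `S̄_{A,B}`. -/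
def InPathsOpt {Sigma QA : Type} {nB : ℕ} [DecidableEq QA]
    (A : MPA Sigma QA) (B : MPA Sigma (Fin nB)) : Option (Elem QA nB) → Prop
  | none => True
  | some e => InPathsO A B (some e)

/-- `g ⊗ e ⊗ g'` where `g, g'` may be the adjoined identity `𝟙` (i.e. `none`). -/
def extWrap {QA : Type} {n : ℕ} (g : Option (Elem QA n)) (e : Elem QA n)
    (g' : Option (Elem QA n)) : Elem QA n :=
  match g, g' with
  | none, none => e
  | some a, none => eprod a e
  | none, some b => eprod e b
  | some a, some b => eprod a (eprod e b)

/-- `TractCore A B k e`: `e` has the form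
`(g_1 (⋯ (g_{k-1} (g_k)^# g'_{k-1})^♭ ⋯)^♭ g'_1)^♭` with `k` flattenings, built from
elements of `S̄_{A,B} ∪ {𝟙}`. -/
inductive TractCore {Sigma QA : Type} {nB : ℕ} [DecidableEq QA]
    (A : MPA Sigma QA) (B : MPA Sigma (Fin nB)) : ℕ → Elem QA nB → Prop
  | base : ∀ e, InPathsO A B (some e) → pathIdem e → TractCore A B 0 (estab e)
  | step : ∀ k e g g', TractCore A B k e →
      InPathsOpt A B g → InPathsOpt A B g' →
      (∀ a, g = some a → a.q = e.p) → (∀ b, g' = some b → e.q = b.p) →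
      pathIdem (extWrap g e g') →
      TractCore A B (k + 1) (eflat (extWrap g e g'))

/-- A tractable witness of non-domination. -/
def IsTractableWitness {Sigma QA : Type} {nB : ℕ} [DecidableEq QA]
    (A : MPA Sigma QA) (B : MPA Sigma (Fin nB)) (wit : Elem QA nB) : Prop :=
  IsWitness A B wit ∧
    ∃ (m : ℕ) (e : Elem QA nB) (g g' : Option (Elem QA nB)),
      m + 1 ≤ 3 * sizeS A B ∧
      TractCore A B m e ∧ InPathsOpt A B g ∧ InPathsOpt A B g' ∧
      (∀ a, g = some a → a.q = e.p) ∧ (∀ b, g' = some b → e.q = b.p) ∧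
      wit = extWrap g e g'

/-! ### Factorisation trees -/

/-- Finite ordered trees labelled by elements of `Ī_{Q_A,|Q_B|}`. -/
inductive FT (QA : Type) (n : ℕ) : Type
  | leaf : Elem QA n → FT QA n
  | node : Elem QA n → List (FT QA n) → FT QA n

namespace FT

variable {QA : Type} {n : ℕ}

/-- The label of the root of a tree. -/
def label : FT QA n → Elem QA n
  | leaf e => e
  | node e _ => e

mutual
  /-- The list of leaf labels of a tree, in order. -/
  def leaves : FT QA n → List (Elem QA n)
    | .leaf e => [e]
    | .node _ cs => leavesList cs
  def leavesList : List (FT QA n) → List (Elem QA n)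
    | [] => []
    | t :: ts => leaves t ++ leavesList ts
end

mutual
  /-- Height of a tree: leaves have height `0`. -/
  def height : FT QA n → ℕ
    | .leaf _ => 0
    | .node _ cs => heightList cs + 1
  def heightList : List (FT QA n) → ℕ
    | [] => 0
    | t :: ts => max (height t) (heightList ts)
end

/-- The `i`-th child. -/
def childAt : FT QA n → ℕ → Option (FT QA n)
  | leaf _, _ => none
  | node _ cs, i => cs[i]?

/-- The subtree at a path (a list of child indices from the root). -/
def subtreeAt : FT QA n → List ℕ → Option (FT QA n)
  | t, [] => some t
  | t, i :: rest => (t.childAt i).bind fun c => subtreeAt c rest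

/-- Well-formed factorisation trees: internal nodes have ≥ 2 children, are labelled by the
product of the children's labels (with compatible endpoints), and nodes with ≥ 3 children
are idempotent nodes: all children and the node itself carry one same idempotent label. -/
inductive WF : FT QA n → Prop
  | leaf : ∀ e, WF (FT.leaf e)
  | node : ∀ (lbl : Elem QA n) (cs : List (FT QA n)),
      2 ≤ cs.length →
      (∀ c ∈ cs, WF c) →
      List.Chain' (fun a b => a.q = b.p) (cs.map FT.label) →
      (∀ h t, cs.map FT.label = h :: t → lbl = t.foldl eprod h) →
      (3 ≤ cs.length → lbl.p = lbl.q ∧ eprod lbl lbl = lbl ∧ ∀ c ∈ cs, FT.label c = lbl) →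
      WF (FT.node lbl cs)

end FT

/-- One top-down step of the computation of contributors: from the contributor set `C` of a
node with children `cs`, the contributor set of the `i`-th child. -/
def contribStep {QA : Type} {n : ℕ} (cs : List (FT QA n)) (C : Set (Fin n × Fin n)) (i : ℕ) :
    Set (Fin n × Fin n) :=
  match cs with
  | [c1, c2] =>
      let M := (FT.label c1).M
      let P := (FT.label c2).M
      if i = 0 then
        {il | ∃ j, (il.1, j) ∈ C ∧ P il.2 j ≠ OSR.bot ∧ M il.1 il.2 ≠ OSR.bot}
      else
        {lj | ∃ a, (a, lj.2) ∈ C ∧ M a lj.1 ≠ OSR.bot ∧ P lj.1 lj.2 ≠ OSR.bot}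
  | c :: _ :: _ :: _ =>
      let M := (FT.label c).M
      if i = 0 then
        {il | ∃ j, (il.1, j) ∈ C ∧ M il.2 j ≠ OSR.bot ∧ M il.1 il.2 ≠ OSR.bot}
      else if i = cs.length - 1 then
        {lj | ∃ a, (a, lj.2) ∈ C ∧ M a lj.1 ≠ OSR.bot ∧ M lj.1 lj.2 ≠ OSR.bot}
      else
        {lk | ∃ a b, (a, b) ∈ C ∧ M a lk.1 ≠ OSR.bot ∧ M lk.2 b ≠ OSR.bot ∧
              M lk.1 lk.2 ≠ OSR.bot ∧ M lk.2 lk.1 ≠ OSR.bot}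
  | _ => ∅

/-- Contributor set of the node at path `π`, starting from the set `C` at the root. -/
def contribAt {QA : Type} {n : ℕ} : FT QA n → Set (Fin n × Fin n) → List ℕ → Set (Fin n × Fin n)
  | _, C, [] => C
  | FT.leaf _, _, _ :: _ => ∅
  | FT.node _ cs, C, i :: rest =>
      match cs[i]? with
      | none => ∅
      | some c => contribAt c (contribStep cs C i) rest

/-- The contributor set of the root: pairs `(i,j)` with `i` initial in `B`, `j` final in `B`
and `M_{i,j} ≠ -∞`. -/
def rootContrib {Sigma QA : Type} {n : ℕ} (B : MPA Sigma (Fin n)) (t : FT QA n) :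
    Set (Fin n × Fin n) :=
  {ij | B.I ij.1 ≠ ⊥ ∧ B.F ij.2 ≠ ⊥ ∧ (FT.label t).M ij.1 ij.2 ≠ OSR.bot}

/-- The contributor set of the node at path `π` of the tree `t`. -/
def contributors {Sigma QA : Type} {n : ℕ} (B : MPA Sigma (Fin n)) (t : FT QA n)
    (π : List ℕ) : Set (Fin n × Fin n) :=
  contribAt t (rootContrib B t) π

/-- `PathLeaves A B p w xs ls q`: `ls` is the list `α_w(w₁), …, α_w(w_k)` associated with the
run of `A` on `w` from `p` to `q` with transition weights `xs`. -/
def PathLeaves {Sigma QA : Type} {nB : ℕ} (A : MPA Sigma QA) (B : MPA Sigma (Fin nB)) :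
    QA → List Sigma → List ℕ → List (Elem QA nB) → QA → Prop
  | p, [], [], [], q => p = q
  | p, a :: w, x :: xs, e :: ls, q =>
      e.p = p ∧ A.M a p e.q = ((x : ℕ) : WithBot ℕ) ∧ e.x = barNat x ∧
      (e.M = fun i j => barW (B.M a i j)) ∧ PathLeaves A B e.q w xs ls q
  | _, _, _, _, _ => False

/-- `t` is a factorisation tree on the word `w` (for the accepting run of `A` on `w`). -/
def IsFactTreeOn {Sigma QA : Type} {nB : ℕ} [Fintype QA] [DecidableEq QA]
    (A : MPA Sigma QA) (B : MPA Sigma (Fin nB)) (w : List Sigma) (t : FT QA nB) : Prop :=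
  FT.WF t ∧ ∃ (p q : QA) (xs : List ℕ),
    A.I p ≠ ⊥ ∧ A.F q ≠ ⊥ ∧ PathLeaves A B p w xs (FT.leaves t) q

/-- The node of `t` at path `π` is a fault. -/
def IsFaultAt {Sigma QA : Type} {nB : ℕ} (B : MPA Sigma (Fin nB)) (t : FT QA nB)
    (π : List ℕ) : Prop :=
  ∃ σ i, π = σ ++ [i] ∧
    ∃ lbl cs, FT.subtreeAt t σ = some (FT.node lbl cs) ∧ 3 ≤ cs.length ∧
      0 < i ∧ i < cs.length - 1 ∧
      ∃ c, cs[i]? = some c ∧ (FT.label c).x = OSR.one ∧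
        ∀ ij ∈ contributors B t π, (FT.label c).M ij.1 ij.2 = OSR.zero

/-- Number of leaves strictly to the left of the node at path `π`. -/
def offsetAt {QA : Type} {n : ℕ} : FT QA n → List ℕ → ℕ
  | _, [] => 0
  | FT.leaf _, _ :: _ => 0
  | FT.node _ cs, i :: rest =>
      ((cs.take i).map fun c => (FT.leaves c).length).sum +
        match cs[i]? with
        | none => 0
        | some c => offsetAt c rest

/-- Height of the node at path `π`. -/
def heightAt {QA : Type} {n : ℕ} (t : FT QA n) (π : List ℕ) : ℕ :=
  match FT.subtreeAt t π with
  | some c => FT.height c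
  | none => 0

/-- The β-labelling: `beta t π` is the β-label of the root of `t`, where `π` is the path
from the root of `t` down to the fault `ν₁`. -/
def beta {QA : Type} {n : ℕ} : FT QA n → List ℕ → Elem QA n
  | t, [] => FT.label t
  | FT.leaf e, _ :: _ => e
  | FT.node lbl cs, i :: rest =>
      match cs[i]? with
      | none => lbl
      | some c =>
        match rest with
        | [] => estab (FT.label c)
        | j :: rest' =>
          let inner := beta c (j :: rest')
          if cs.length = 2 then
            (if i = 0 then eprod inner ((cs[1]?.map FT.label).getD lbl)
             else eprod ((cs[0]?.map FT.label).getD lbl) inner)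
          else
            if i = 0 then eprod inner (FT.label c)
            else if i = cs.length - 1 then eprod (FT.label c) inner
            else eflat inner

/-! ### Auxiliary development for the proof -/

namespace OSR

instance : Fintype OSR where
  elems := {OSR.bot, OSR.zero, OSR.one, OSR.inf}
  complete := by intro x; cases x <;> decide

instance : DecidableRel (α := OSR) (· ≤ ·) :=
  fun a b => inferInstanceAs (Decidable (a.rank ≤ b.rank))

lemma le_trans' : ∀ {a b c : OSR}, a ≤ b → b ≤ c → a ≤ c := by decide
lemma bot_le' : ∀ a : OSR, bot ≤ a := by decide
lemma ne_bot_of_le : ∀ {a b : OSR}, a ≤ b → a ≠ bot → b ≠ bot := by decide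
lemma bar_add : ∀ a b : OSR, (add a b).bar = add a.bar b.bar := by decide
lemma bar_sup : ∀ a b : OSR, (sup a b).bar = sup a.bar b.bar := by decide
lemma bar_sharp : ∀ a : OSR, a.sharp.bar = a.bar := by decide
lemma bar_bar : ∀ a : OSR, a.bar.bar = a.bar := by decide
lemma add_le_one : ∀ {a b : OSR}, a ≤ one → b ≤ one → add a b ≤ one := by decide
lemma add_ne_bot : ∀ {a b : OSR}, a ≠ bot → b ≠ bot → add a b ≠ bot := by decide
lemma add_bot : ∀ a : OSR, add a bot = bot := by decide
lemma bot_add : ∀ a : OSR, add bot a = bot := by decide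
lemma add_inf_left : ∀ {a : OSR}, a ≠ bot → add inf a = inf := by decide
lemma add_inf_right : ∀ {a : OSR}, a ≠ bot → add a inf = inf := by decide
lemma mem3 : ∀ a : OSR, a.bar = a → a = bot ∨ a = zero ∨ a = one := by decide
lemma le_one_of_bar : ∀ {a : OSR}, a.bar = a → a ≤ one := by decide
lemma bar_eq_bot : ∀ {a : OSR}, a.bar = bot ↔ a = bot := by decide
lemma sup_le' : ∀ {a b c : OSR}, a ≤ c → b ≤ c → sup a b ≤ c := by decide
lemma le_sup_left' : ∀ a b : OSR, a ≤ sup a b := by decide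
lemma le_sup_right' : ∀ a b : OSR, b ≤ sup a b := by decide
lemma sup_cases : ∀ a b : OSR, sup a b = a ∨ sup a b = b := by decide
lemma add3_ne_inf : ∀ {a b c : OSR}, a ≤ one → b ≤ one → c ≤ one →
    add a (add b c) ≠ inf := by decide
lemma add_eq_inf : ∀ {a b : OSR}, add a b = inf → a ≠ bot ∧ b ≠ bot := by decide

end OSR

section OsumLemmas

variable {n : ℕ}

private def lsup (l : List OSR) : OSR := l.foldr OSR.sup OSR.bot

lemma lsup_le {l : List OSR} {c : OSR} (h : ∀ x ∈ l, x ≤ c) : lsup l ≤ c := by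
  induction l with
  | nil => exact OSR.bot_le' c
  | cons a l ih =>
      exact OSR.sup_le' (h a (by simp)) (ih fun x hx => h x (by simp [hx]))

lemma le_lsup {l : List OSR} {x : OSR} (h : x ∈ l) : x ≤ lsup l := by
  induction l with
  | nil => simp at h
  | cons a l ih =>
      rcases List.mem_cons.mp h with rfl | hx
      · exact OSR.le_sup_left' _ _
      · exact OSR.le_trans' (ih hx) (OSR.le_sup_right' _ _)

lemma lsup_spec (l : List OSR) : lsup l = OSR.bot ∨ lsup l ∈ l := by
  induction l with
  | nil => left; rfl
  | cons a l ih =>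
      have hd : lsup (a :: l) = OSR.sup a (lsup l) := rfl
      rcases OSR.sup_cases a (lsup l) with h | h
      · right; rw [hd, h]; simp
      · rcases ih with h' | h'
        · left; rw [hd, h]; exact h'
        · right; rw [hd, h]; exact List.mem_cons_of_mem _ h'

lemma bar_lsup (l : List OSR) : (lsup l).bar = lsup (l.map OSR.bar) := by
  induction l with
  | nil => rfl
  | cons a l ih =>
      show (OSR.sup a (lsup l)).bar = OSR.sup a.bar (lsup (l.map OSR.bar))
      rw [OSR.bar_sup, ih]

lemma osum_eq_lsup (f : Fin n → OSR) : osum f = lsup ((List.finRange n).map f) := by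
  rw [osum, lsup, List.foldr_map]

lemma osum_le {f : Fin n → OSR} {c : OSR} (h : ∀ j, f j ≤ c) : osum f ≤ c := by
  rw [osum_eq_lsup]
  exact lsup_le (by rintro x hx; obtain ⟨j, -, rfl⟩ := List.mem_map.mp hx; exact h j)

lemma le_osum (f : Fin n → OSR) (j : Fin n) : f j ≤ osum f := by
  rw [osum_eq_lsup]
  exact le_lsup (List.mem_map_of_mem (f := f) (List.mem_finRange j))

lemma osum_spec (f : Fin n → OSR) : osum f = OSR.bot ∨ ∃ j, osum f = f j := by
  rw [osum_eq_lsup]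
  rcases lsup_spec ((List.finRange n).map f) with h | h
  · exact Or.inl h
  · obtain ⟨j, -, hj⟩ := List.mem_map.mp h
    exact Or.inr ⟨j, hj.symm⟩

lemma bar_osum (f : Fin n → OSR) : (osum f).bar = osum fun j => (f j).bar := by
  rw [osum_eq_lsup, osum_eq_lsup, bar_lsup, List.map_map]; rfl

lemma obar_omul (M N : Fin n → Fin n → OSR) :
    obar (omul M N) = omul (obar M) (obar N) := by
  funext i k
  show (osum fun j => OSR.add (M i j) (N j k)).bar = _
  rw [bar_osum]
  exact congrArg osum (funext fun j => OSR.bar_add _ _)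

lemma omul_le_one {M N : Fin n → Fin n → OSR} {i k : Fin n}
    (h : ∀ j, OSR.add (M i j) (N j k) ≤ OSR.one) : omul M N i k ≤ OSR.one :=
  osum_le h

lemma omul_ne_bot_of {M N : Fin n → Fin n → OSR} {i j k : Fin n}
    (h1 : M i j ≠ OSR.bot) (h2 : N j k ≠ OSR.bot) : omul M N i k ≠ OSR.bot :=
  OSR.ne_bot_of_le (le_osum _ j) (OSR.add_ne_bot h1 h2)

lemma trans_ne_bot {M : Fin n → Fin n → OSR} (hM : omul M M = M) {x y z : Fin n}
    (h1 : M x y ≠ OSR.bot) (h2 : M y z ≠ OSR.bot) : M x z ≠ OSR.bot := by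
  rw [← hM]; exact omul_ne_bot_of h1 h2

end OsumLemmas

section ElemLemmas

variable {QA : Type} {n : ℕ}

/-- `e` has all entries in `Ω̄` and a non-`-∞` weight. -/
def GoodE (e : Elem QA n) : Prop :=
  e.x.bar = e.x ∧ e.x ≠ OSR.bot ∧ obar e.M = e.M

lemma GoodE.ebar_eq {e : Elem QA n} (h : GoodE e) : ebar e = e := by
  obtain ⟨p, x, q, M⟩ := e
  obtain ⟨h1, -, h3⟩ := h
  simp only [ebar] at *
  rw [h1, h3]

lemma GoodE.eprod {e f : Elem QA n} (he : GoodE e) (hf : GoodE f) :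
    GoodE (eprod e f) := by
  refine ⟨?_, ?_, ?_⟩
  · show (OSR.add e.x f.x).bar = OSR.add e.x f.x
    rw [OSR.bar_add, he.1, hf.1]
  · exact OSR.add_ne_bot he.2.1 hf.2.1
  · show obar (omul e.M f.M) = omul e.M f.M
    rw [obar_omul, he.2.2, hf.2.2]

lemma ebar_eprod (e f : Elem QA n) : ebar (eprod e f) = eprod (ebar e) (ebar f) := by
  simp only [ebar, _root_.eprod]
  rw [OSR.bar_add, obar_omul]

lemma barW_bar (y : WithBot ℕ) : (barW y).bar = barW y := by
  cases y with
  | bot => rfl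
  | coe m => simp only [barW, WithBot.recBotCoe]; split <;> rfl

lemma barW_ne_bot {y : WithBot ℕ} : barW y ≠ OSR.bot ↔ y ≠ ⊥ := by
  cases y with
  | bot => simp [barW, WithBot.recBotCoe]
  | coe m =>
      simp only [barW, WithBot.recBotCoe]
      constructor
      · intro _ h; exact (WithBot.coe_ne_bot h)
      · intro _; split <;> simp

lemma barNat_bar (m : ℕ) : (barNat m).bar = barNat m := by
  simp only [barNat]; split <;> rfl

lemma barNat_ne_bot (m : ℕ) : barNat m ≠ OSR.bot := by
  simp only [barNat]; split <;> simp

lemma GoodE_of_gen {Sigma : Type} {A : MPA Sigma QA} {B : MPA Sigma (Fin n)}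
    {e : Elem QA n} (h : IsGen A B e) : GoodE e := by
  obtain ⟨a, p, q, x, -, rfl⟩ := h
  refine ⟨barNat_bar x, barNat_ne_bot x, ?_⟩
  funext i j
  exact barW_bar _

lemma obar_mdiagSharp {M : Fin n → Fin n → OSR} (h : obar M = M) :
    obar (mdiagSharp M) = M := by
  funext i j
  show (mdiagSharp M i j).bar = M i j
  simp only [mdiagSharp]
  split
  · rw [OSR.bar_sharp]; exact congrFun (congrFun h i) j
  · exact congrFun (congrFun h i) j

lemma obar_mstab {M : Fin n → Fin n → OSR} (hb : obar M = M) (hM : omul M M = M) :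
    obar (mstab M) = M := by
  show obar (omul (omul M (mdiagSharp M)) M) = M
  rw [obar_omul, obar_omul, hb, obar_mdiagSharp hb, hM, hM]

lemma obar_mangle (M : Fin n → Fin n → OSR) : obar (mangle M) = obar M := by
  funext i j
  show (mangle M i j).bar = (M i j).bar
  simp only [mangle]
  split
  · rfl
  · exact OSR.bar_bar _

lemma obar_mflat {M : Fin n → Fin n → OSR} (hb : obar M = M) (hM : omul M M = M) :
    obar (mflat M) = M := by
  have hK : obar (omul M (omul M M)) = M := by rw [obar_omul, obar_omul, hb, hM, hM]
  show obar (omul (obar M) (omul (mangle (omul M (omul M M))) (obar M))) = M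
  rw [hb, obar_omul, obar_omul, obar_mangle, hK, hb, hM, hM]

end ElemLemmas

section TreeLemmas

variable {QA : Type} {n : ℕ}

lemma leaves_leaf (e : Elem QA n) : FT.leaves (FT.leaf e) = [e] := rfl

lemma leaves_node (lbl : Elem QA n) (cs : List (FT QA n)) :
    FT.leaves (FT.node lbl cs) = FT.leavesList cs := rfl

lemma leavesList_cons (c : FT QA n) (cs : List (FT QA n)) :
    FT.leavesList (c :: cs) = FT.leaves c ++ FT.leavesList cs := rfl

lemma mem_leavesList {cs : List (FT QA n)} {c : FT QA n} {e : Elem QA n}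
    (hc : c ∈ cs) (he : e ∈ FT.leaves c) : e ∈ FT.leavesList cs := by
  induction cs with
  | nil => simp at hc
  | cons c' cs ih =>
      rw [leavesList_cons]
      rcases List.mem_cons.mp hc with rfl | h
      · exact List.mem_append_left _ he
      · exact List.mem_append_right _ (ih h)

lemma leaves_ne_nil {t : FT QA n} (h : FT.WF t) : FT.leaves t ≠ [] := by
  induction h with
  | leaf e => simp [leaves_leaf]
  | node lbl cs hlen hwf hchain hfold hid ih =>
      rw [leaves_node]
      match cs, hlen with
      | c :: cs', _ =>
          rw [leavesList_cons]
          exact fun hcontra => ih c (by simp) (List.append_eq_nil_iff.mp hcontra).1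

lemma subtreeAt_append (σ τ : List ℕ) : ∀ t : FT QA n,
    FT.subtreeAt t (σ ++ τ) = (FT.subtreeAt t σ).bind fun c => FT.subtreeAt c τ := by
  induction σ with
  | nil => intro t; rfl
  | cons i σ' ih =>
      intro t
      cases t with
      | leaf e => rfl
      | node lbl cs =>
          have hl : ∀ ρ : List ℕ, FT.subtreeAt (FT.node lbl cs) (i :: ρ) =
              (cs[i]?).bind fun c => FT.subtreeAt c ρ := fun ρ => rfl
          rw [show ((i : ℕ) :: σ') ++ τ = i :: (σ' ++ τ) from rfl, hl, hl]
          cases h : cs[i]? with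
          | none => rfl
          | some c => simp [ih c]

lemma subtree_child {t : FT QA n} {σ : List ℕ} {lbl cs i c}
    (h : FT.subtreeAt t σ = some (FT.node lbl cs)) (hc : cs[i]? = some c) :
    FT.subtreeAt t (σ ++ [i]) = some c := by
  rw [subtreeAt_append, h]
  show FT.subtreeAt (FT.node lbl cs) [i] = some c
  simp [FT.subtreeAt, FT.childAt, hc]

lemma subtree_wf {σ : List ℕ} : ∀ {t c : FT QA n},
    FT.WF t → FT.subtreeAt t σ = some c → FT.WF c := by
  induction σ with
  | nil => intro t c hwf h; cases h; exact hwf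
  | cons i σ' ih =>
      intro t c hwf h
      cases t with
      | leaf e =>
          rw [show FT.subtreeAt (FT.leaf e) (i :: σ') = none from rfl] at h
          cases h
      | node lbl cs =>
          rw [show FT.subtreeAt (FT.node lbl cs) (i :: σ') =
              (cs[i]?).bind (fun c' => FT.subtreeAt c' σ') from rfl] at h
          cases hcs : cs[i]? with
          | none => rw [hcs] at h; cases h
          | some c' =>
              rw [hcs] at h; simp only [Option.bind_some] at h
              cases hwf with
              | node _ _ hlen hwfc _ _ _ =>
                  exact ih (hwfc c' (List.mem_of_getElem? hcs)) h

lemma subtree_leaves {σ : List ℕ} : ∀ {t c : FT QA n},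
    FT.subtreeAt t σ = some c → ∀ e ∈ FT.leaves c, e ∈ FT.leaves t := by
  induction σ with
  | nil => intro t c h; cases h; exact fun e he => he
  | cons i σ' ih =>
      intro t c h
      cases t with
      | leaf e =>
          rw [show FT.subtreeAt (FT.leaf e) (i :: σ') = none from rfl] at h
          cases h
      | node lbl cs =>
          rw [show FT.subtreeAt (FT.node lbl cs) (i :: σ') =
              (cs[i]?).bind (fun c' => FT.subtreeAt c' σ') from rfl] at h
          cases hcs : cs[i]? with
          | none => rw [hcs] at h; cases h
          | some c' =>
              rw [hcs] at h; simp only [Option.bind_some] at h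
              intro e he
              rw [leaves_node]
              exact mem_leavesList (List.mem_of_getElem? hcs) (ih h e he)

end TreeLemmas

section SemigroupLemmas

variable {Sigma QA : Type} {nB : ℕ} [DecidableEq QA]
variable {A : MPA Sigma QA} {B : MPA Sigma (Fin nB)}

lemma inPaths_inAsymp {x : Option (Elem QA nB)} (h : InPathsO A B x) :
    InAsympO A B x := by
  induction h with
  | gen e he => exact InAsympO.gen e he
  | mul x y hx hy ihx ihy => exact InAsympO.mul x y ihx ihy

lemma inPaths_eprod {e f : Elem QA nB} (he : InPathsO A B (some e))
    (hf : InPathsO A B (some f)) (hq : e.q = f.p) :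
    InPathsO A B (some (eprod e f)) := by
  have := InPathsO.mul _ _ he hf
  rwa [show omulO (some e) (some f) = some (eprod e f) by simp [omulO, hq]] at this

lemma inAsymp_eprod {e f : Elem QA nB} (he : InAsympO A B (some e))
    (hf : InAsympO A B (some f)) (hq : e.q = f.p) :
    InAsympO A B (some (eprod e f)) := by
  have := InAsympO.mul _ _ he hf
  rwa [show omulO (some e) (some f) = some (eprod e f) by simp [omulO, hq]] at this

lemma chain'_congr_head {e f : Elem QA nB} {l : List (Elem QA nB)}
    (h : List.Chain' (fun a b => a.q = b.p) (e :: l)) (hq : f.q = e.q) :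
    List.Chain' (fun a b => a.q = b.p) (f :: l) := by
  cases l with
  | nil => exact List.isChain_singleton _
  | cons b l =>
      simp only [List.Chain', List.isChain_cons_cons] at h ⊢
      exact ⟨hq.trans h.1, h.2⟩

lemma fold_spec : ∀ (l : List (Elem QA nB)) (h : Elem QA nB),
    GoodE h → InPathsO A B (some h) →
    (∀ e ∈ l, GoodE e ∧ InPathsO A B (some e)) →
    List.Chain' (fun a b => a.q = b.p) (h :: l) →
    GoodE (l.foldl eprod h) ∧ InPathsO A B (some (l.foldl eprod h)) ∧
      (l.foldl eprod h).p = h.p ∧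
      ∀ z, (h :: l).getLast? = some z → (l.foldl eprod h).q = z.q := by
  intro l
  induction l with
  | nil =>
      intro h hg hp _ _
      refine ⟨hg, hp, rfl, ?_⟩
      intro z hz
      simp at hz
      rw [hz]
      rfl
  | cons e l ih =>
      intro h hg hp hl hchain
      simp only [List.Chain', List.isChain_cons_cons] at hchain
      have hge := (hl e (by simp)).1
      have hpe := (hl e (by simp)).2
      have hg' : GoodE (eprod h e) := hg.eprod hge
      have hp' : InPathsO A B (some (eprod h e)) := inPaths_eprod hp hpe hchain.1
      have hchain' : List.Chain' (fun a b => a.q = b.p) (eprod h e :: l) :=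
        chain'_congr_head hchain.2 rfl
      have := ih (eprod h e) hg' hp' (fun x hx => hl x (by simp [hx])) hchain'
      refine ⟨this.1, this.2.1, this.2.2.1, ?_⟩
      intro z hz
      cases l with
      | nil =>
          simp at hz
          subst hz
          exact this.2.2.2 (eprod h e) (by simp)
      | cons b l' =>
          rw [List.getLast?_cons_cons] at hz
          exact this.2.2.2 z (by rw [List.getLast?_cons_cons]; exact hz)

lemma getLast?_leavesList : ∀ (cs : List (FT QA nB)),
    (∀ c ∈ cs, FT.leaves c ≠ []) → ∀ cl, cs.getLast? = some cl →
    (FT.leavesList cs).getLast? = (FT.leaves cl).getLast? := by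
  intro cs
  induction cs with
  | nil => intro _ cl h; simp at h
  | cons c cs ih =>
      intro hne cl h
      cases cs with
      | nil =>
          simp at h
          subst h
          rw [leavesList_cons, show FT.leavesList ([] : List (FT QA nB)) = [] from rfl,
            List.append_nil]
      | cons c' cs' =>
          rw [List.getLast?_cons_cons] at h
          rw [leavesList_cons, List.getLast?_append,
            ih (fun x hx => hne x (by simp [hx])) cl h]
          have hne' : (FT.leaves cl).getLast? ≠ none := by
            rw [ne_eq, List.getLast?_eq_none_iff]
            have : cl ∈ c' :: cs' := List.mem_of_mem_getLast? (by simp [h])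
            exact hne cl (by simp [this])
          cases hgl : (FT.leaves cl).getLast? with
          | none => exact absurd hgl hne'
          | some z => rfl

lemma label_good : ∀ {t : FT QA nB}, FT.WF t →
    (∀ e ∈ FT.leaves t, IsGen A B e) →
    GoodE (FT.label t) ∧ InPathsO A B (some (FT.label t)) ∧
      (∃ e, (FT.leaves t).head? = some e ∧ (FT.label t).p = e.p) ∧
      (∃ e, (FT.leaves t).getLast? = some e ∧ (FT.label t).q = e.q) := by
  intro t hwf
  induction hwf with
  | leaf e =>
      intro hgen
      have hg := hgen e (by simp [leaves_leaf])
      exact ⟨GoodE_of_gen hg, InPathsO.gen e hg, ⟨e, rfl, rfl⟩, ⟨e, rfl, rfl⟩⟩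
  | node lbl cs hlen hwfc hchain hfold hid ih =>
      intro hgen
      have hgc : ∀ c ∈ cs, ∀ e ∈ FT.leaves c, IsGen A B e := by
        intro c hc e he
        exact hgen e (by rw [leaves_node]; exact mem_leavesList hc he)
      have ihc : ∀ c ∈ cs, GoodE (FT.label c) ∧ InPathsO A B (some (FT.label c)) ∧
          (∃ e, (FT.leaves c).head? = some e ∧ (FT.label c).p = e.p) ∧
          (∃ e, (FT.leaves c).getLast? = some e ∧ (FT.label c).q = e.q) :=
        fun c hc => ih c hc (hgc c hc)
      match cs, hlen, hchain, hfold, hgc, ihc with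
      | c1 :: cs', _, hchain, hfold, hgc, ihc =>
          have hlbl : lbl = (cs'.map FT.label).foldl eprod (FT.label c1) :=
            hfold (FT.label c1) (cs'.map FT.label) (by simp)
          have hmap : ∀ x ∈ cs'.map FT.label, GoodE x ∧ InPathsO A B (some x) := by
            rintro x hx
            obtain ⟨c, hc, rfl⟩ := List.mem_map.mp hx
            exact ⟨(ihc c (by simp [hc])).1, (ihc c (by simp [hc])).2.1⟩
          have hchain' : List.Chain' (fun a b => a.q = b.p)
              (FT.label c1 :: cs'.map FT.label) := by
            have : (c1 :: cs').map FT.label = FT.label c1 :: cs'.map FT.label := rfl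
            rwa [this] at hchain
          obtain ⟨hGood, hPath, hp, hq⟩ := fold_spec (cs'.map FT.label) (FT.label c1)
            (ihc c1 (by simp)).1 (ihc c1 (by simp)).2.1 hmap hchain'
          rw [← hlbl] at hGood hPath hp hq
          refine ⟨hGood, hPath, ?_, ?_⟩
          · -- head
            obtain ⟨e, he1, he2⟩ := (ihc c1 (by simp)).2.2.1
            refine ⟨e, ?_, by rw [show FT.label (FT.node lbl (c1 :: cs')) = lbl from rfl, hp, he2]⟩
            rw [leaves_node, leavesList_cons, List.head?_append, he1]
            rfl
          · -- getLast
            obtain ⟨cl, hcl⟩ : ∃ cl, (c1 :: cs').getLast? = some cl := by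
              cases h : (c1 :: cs').getLast? with
              | none => rw [List.getLast?_eq_none_iff] at h; simp at h
              | some z => exact ⟨z, rfl⟩
            obtain ⟨e, he1, he2⟩ := (ihc cl (List.mem_of_mem_getLast? (by simp [hcl]))).2.2.2
            have hmapl : (FT.label c1 :: cs'.map FT.label).getLast? = some (FT.label cl) := by
              have : (FT.label c1 :: cs'.map FT.label) = (c1 :: cs').map FT.label := rfl
              rw [this, List.getLast?_map, hcl]
              rfl
            refine ⟨e, ?_, ?_⟩
            · rw [leaves_node]
              rw [getLast?_leavesList (c1 :: cs')
                (fun c hc => leaves_ne_nil (hwfc c hc)) cl hcl]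
              exact he1
            · rw [show FT.label (FT.node lbl (c1 :: cs')) = lbl from rfl,
                hq (FT.label cl) hmapl, he2]

end SemigroupLemmas

section PathLeavesLemmas

variable {Sigma QA : Type} {nB : ℕ}
variable {A : MPA Sigma QA} {B : MPA Sigma (Fin nB)}

lemma PL_gen : ∀ (w : List Sigma) (p : QA) (xs : List ℕ) (ls : List (Elem QA nB)) (q : QA),
    PathLeaves A B p w xs ls q → ∀ e ∈ ls, IsGen A B e := by
  intro w
  induction w with
  | nil =>
      intro p xs ls q h
      cases xs with
      | nil =>
          cases ls with
          | nil => intro e he; simp at he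
          | cons e ls' => exact absurd h (by simp [PathLeaves])
      | cons x xs' => exact absurd h (by simp [PathLeaves])
  | cons a w' ih =>
      intro p xs ls q h
      cases xs with
      | nil => exact absurd h (by simp [PathLeaves])
      | cons x xs' =>
          cases ls with
          | nil => exact absurd h (by simp [PathLeaves])
          | cons e ls' =>
              obtain ⟨hep, hM, hx, hMe, hrec⟩ := h
              intro e' he'
              rcases List.mem_cons.mp he' with rfl | h'
              · refine ⟨a, p, e'.q, x, hM, ?_⟩
                obtain ⟨ep, ex, eq, eM⟩ := e'
                simp only at hep hx hMe ⊢
                rw [hep, hx, hMe]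
              · exact ih e.q xs' ls' q hrec e' h'

lemma PL_head : ∀ (w : List Sigma) (p : QA) (xs : List ℕ) (ls : List (Elem QA nB)) (q : QA),
    PathLeaves A B p w xs ls q → ∀ e, ls.head? = some e → e.p = p := by
  intro w
  cases w with
  | nil =>
      intro p xs ls q h
      cases xs with
      | nil =>
          cases ls with
          | nil => intro e he; simp at he
          | cons e ls' => exact absurd h (by simp [PathLeaves])
      | cons x xs' => exact absurd h (by simp [PathLeaves])
  | cons a w' =>
      intro p xs ls q h
      cases xs with
      | nil => exact absurd h (by simp [PathLeaves])
      | cons x xs' =>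
          cases ls with
          | nil => exact absurd h (by simp [PathLeaves])
          | cons e ls' =>
              intro e' he'
              simp at he'
              rw [← he']
              exact h.1

lemma PL_last : ∀ (w : List Sigma) (p : QA) (xs : List ℕ) (ls : List (Elem QA nB)) {q : QA},
    PathLeaves A B p w xs ls q → ∀ e, ls.getLast? = some e → e.q = q := by
  intro w
  induction w with
  | nil =>
      intro p xs ls q h
      cases xs with
      | nil =>
          cases ls with
          | nil => intro e he; simp at he
          | cons e ls' => exact absurd h (by simp [PathLeaves])
      | cons x xs' => exact absurd h (by simp [PathLeaves])
  | cons a w' ih =>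
      intro p xs ls q h
      cases xs with
      | nil => exact absurd h (by simp [PathLeaves])
      | cons x xs' =>
          cases ls with
          | nil => exact absurd h (by simp [PathLeaves])
          | cons e ls' =>
              obtain ⟨hep, hM, hx, hMe, hrec⟩ := h
              intro e' he'
              cases ls' with
              | nil =>
                  simp at he'
                  subst he'
                  -- hrec : PathLeaves A B e'.q w' xs' [] q
                  cases w' with
                  | nil =>
                      cases xs' with
                      | nil => exact hrec
                      | cons y ys => exact absurd hrec (by simp [PathLeaves])
                  | cons b w'' =>
                      cases xs' with
                      | nil => exact absurd hrec (by simp [PathLeaves])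
                      | cons y ys => exact absurd hrec (by simp [PathLeaves])
              | cons e2 ls'' =>
                  rw [List.getLast?_cons_cons] at he'
                  exact ih e.q xs' (e2 :: ls'') hrec e' he'

end PathLeavesLemmas

section ContribLemmas

variable {Sigma QA : Type} {n : ℕ}

lemma contribAt_nil (t : FT QA n) (C : Set (Fin n × Fin n)) : contribAt t C [] = C := by
  cases t <;> rfl

lemma contribAt_snoc : ∀ (σ : List ℕ) (t : FT QA n) (C : Set (Fin n × Fin n))
    (i : ℕ) (lbl : Elem QA n) (cs : List (FT QA n)) (c : FT QA n),
    FT.subtreeAt t σ = some (FT.node lbl cs) → cs[i]? = some c →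
    contribAt t C (σ ++ [i]) = contribStep cs (contribAt t C σ) i := by
  intro σ
  induction σ with
  | nil =>
      intro t C i lbl cs c h hc
      cases h
      rw [contribAt_nil]
      rw [show ([] ++ [i] : List ℕ) = [i] from rfl]
      rw [show contribAt (FT.node lbl cs) C [i] =
        (match cs[i]? with
         | none => ∅
         | some c => contribAt c (contribStep cs C i) []) from rfl, hc]
      exact contribAt_nil c _
  | cons j σ' ih =>
      intro t C i lbl cs c h hc
      cases t with
      | leaf e =>
          rw [show FT.subtreeAt (FT.leaf e) (j :: σ') = none from rfl] at h
          cases h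
      | node lbl2 cs2 =>
          rw [show FT.subtreeAt (FT.node lbl2 cs2) (j :: σ') =
              (cs2[j]?).bind (fun c' => FT.subtreeAt c' σ') from rfl] at h
          cases hcs2 : cs2[j]? with
          | none => rw [hcs2] at h; cases h
          | some c2 =>
              rw [hcs2] at h
              simp only [Option.bind_some] at h
              rw [show ((j :: σ') ++ [i] : List ℕ) = j :: (σ' ++ [i]) from rfl]
              rw [show contribAt (FT.node lbl2 cs2) C (j :: (σ' ++ [i])) =
                (match cs2[j]? with
                 | none => ∅
                 | some c' => contribAt c' (contribStep cs2 C j) (σ' ++ [i])) from rfl, hcs2]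
              rw [show contribAt (FT.node lbl2 cs2) C (j :: σ') =
                (match cs2[j]? with
                 | none => ∅
                 | some c' => contribAt c' (contribStep cs2 C j) σ') from rfl, hcs2]
              exact ih c2 (contribStep cs2 C j) i lbl cs c h hc

lemma contributors_snoc {B : MPA Sigma (Fin n)} {t : FT QA n} {σ : List ℕ}
    {i : ℕ} {lbl : Elem QA n} {cs : List (FT QA n)} {c : FT QA n}
    (h : FT.subtreeAt t σ = some (FT.node lbl cs)) (hc : cs[i]? = some c) :
    contributors B t (σ ++ [i]) = contribStep cs (contributors B t σ) i :=
  contribAt_snoc σ t _ i lbl cs c h hc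

end ContribLemmas

section BetaLemmas

variable {QA : Type} {n : ℕ}

lemma beta_singleton {lbl : Elem QA n} {cs : List (FT QA n)} {i : ℕ} {c : FT QA n}
    (hc : cs[i]? = some c) : beta (FT.node lbl cs) [i] = estab (FT.label c) := by
  delta beta
  conv_lhs => whnf
  rw [hc]

lemma beta_mid {lbl : Elem QA n} {cs : List (FT QA n)} {i j : ℕ} {τ : List ℕ} {c : FT QA n}
    (hc : cs[i]? = some c) (h2 : cs.length ≠ 2) (h0 : i ≠ 0) (hl : i ≠ cs.length - 1) :
    beta (FT.node lbl cs) (i :: j :: τ) = eflat (beta c (j :: τ)) := by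
  delta beta
  conv_lhs => whnf
  rw [hc]
  simp only [if_neg h2, if_neg h0, if_neg hl]

lemma beta_left {lbl : Elem QA n} {cs : List (FT QA n)} {i j : ℕ} {τ : List ℕ} {c : FT QA n}
    (hc : cs[i]? = some c) (h2 : cs.length ≠ 2) (h0 : i = 0) :
    beta (FT.node lbl cs) (i :: j :: τ) = eprod (beta c (j :: τ)) (FT.label c) := by
  delta beta
  conv_lhs => whnf
  rw [hc]
  simp only [if_neg h2, if_pos h0]

lemma beta_right {lbl : Elem QA n} {cs : List (FT QA n)} {i j : ℕ} {τ : List ℕ} {c : FT QA n}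
    (hc : cs[i]? = some c) (h2 : cs.length ≠ 2) (h0 : i ≠ 0) (hl : i = cs.length - 1) :
    beta (FT.node lbl cs) (i :: j :: τ) = eprod (FT.label c) (beta c (j :: τ)) := by
  delta beta
  conv_lhs => whnf
  rw [hc]
  simp only [if_neg h2, if_neg h0, if_pos hl]

lemma beta_bin0 (lbl : Elem QA n) (c1 c2 : FT QA n) (j : ℕ) (τ : List ℕ) :
    beta (FT.node lbl [c1, c2]) (0 :: j :: τ) = eprod (beta c1 (j :: τ)) (FT.label c2) := rfl

lemma beta_bin1 (lbl : Elem QA n) (c1 c2 : FT QA n) (j : ℕ) (τ : List ℕ) :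
    beta (FT.node lbl [c1, c2]) (1 :: j :: τ) = eprod (FT.label c1) (beta c2 (j :: τ)) := rfl

end BetaLemmas

section BoundLemmas

variable {n : ℕ}

lemma OSR.bar_le_one : ∀ a : OSR, a.bar ≤ OSR.one := by decide

lemma entry_le_one {M : Fin n → Fin n → OSR} (h : obar M = M) (i j : Fin n) :
    M i j ≤ OSR.one :=
  OSR.le_one_of_bar (congrFun (congrFun h i) j)

lemma ne_bot_iff {N M : Fin n → Fin n → OSR} (h : obar N = M) (i j : Fin n) :
    N i j ≠ OSR.bot ↔ M i j ≠ OSR.bot := by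
  have hb : (N i j).bar = M i j := congrFun (congrFun h i) j
  rw [← hb]
  exact not_congr OSR.bar_eq_bot.symm

lemma obar_obar (M : Fin n → Fin n → OSR) : obar (obar M) = obar M :=
  funext fun i => funext fun j => OSR.bar_bar _

lemma obar_mflat' {N M : Fin n → Fin n → OSR} (h : obar N = M) (hMM : omul M M = M) :
    obar (mflat N) = M := by
  show obar (omul (obar N) (omul (mangle (omul N (omul N N))) (obar N))) = M
  rw [obar_omul, obar_omul, obar_mangle, obar_omul, obar_omul, obar_obar, h]
  simp only [hMM]

lemma stab_bound {M : Fin n → Fin n → OSR} {C : Set (Fin n × Fin n)}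
    (hbar : obar M = M)
    (hz : ∀ ℓ k : Fin n, (∃ a b : Fin n, (a, b) ∈ C ∧ M a ℓ ≠ OSR.bot ∧ M k b ≠ OSR.bot ∧
      M ℓ k ≠ OSR.bot ∧ M k ℓ ≠ OSR.bot) → M ℓ k = OSR.zero) :
    ∀ a b : Fin n, (a, b) ∈ C → mstab M a b ≤ OSR.one := by
  intro a b hab
  show omul (omul M (mdiagSharp M)) M a b ≤ OSR.one
  apply omul_le_one
  intro k
  by_cases hkb : M k b = OSR.bot
  · rw [hkb, OSR.add_bot]; exact OSR.bot_le' _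
  · apply OSR.add_le_one ?_ (entry_le_one hbar k b)
    apply omul_le_one
    intro ℓ
    by_cases hal : M a ℓ = OSR.bot
    · rw [hal, OSR.bot_add]; exact OSR.bot_le' _
    · apply OSR.add_le_one (entry_le_one hbar a ℓ)
      by_cases hlk : ℓ = k
      · subst hlk
        rw [show mdiagSharp M ℓ ℓ = (M ℓ ℓ).sharp by simp [mdiagSharp]]
        rcases OSR.mem3 (M ℓ ℓ) (congrFun (congrFun hbar ℓ) ℓ) with h | h | h
        · rw [h]; decide
        · rw [h]; decide
        · exfalso
          have := hz ℓ ℓ ⟨a, b, hab, hal, hkb, by rw [h]; decide, by rw [h]; decide⟩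
          rw [h] at this
          cases this
      · rw [show mdiagSharp M ℓ k = M ℓ k by simp [mdiagSharp, hlk]]
        exact entry_le_one hbar ℓ k

lemma OSR.ne_bot_of_add : ∀ {a b : OSR}, OSR.add a b ≠ OSR.bot → a ≠ OSR.bot ∧ b ≠ OSR.bot := by
  decide

lemma omul_ne_bot_exists {M N : Fin n → Fin n → OSR} {i k : Fin n}
    (h : omul M N i k ≠ OSR.bot) : ∃ j, M i j ≠ OSR.bot ∧ N j k ≠ OSR.bot := by
  rcases osum_spec (fun j => OSR.add (M i j) (N j k)) with h0 | ⟨j, hj⟩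
  · exact absurd h0 h
  · rw [show omul M N i k = osum (fun j => OSR.add (M i j) (N j k)) from rfl, hj] at h
    exact ⟨j, OSR.ne_bot_of_add h⟩

lemma flat_bound {N M : Fin n → Fin n → OSR} {C : Set (Fin n × Fin n)}
    (hbar : obar N = M) (hMbar : obar M = M) (hMM : omul M M = M)
    (hb : ∀ ℓ k : Fin n, (∃ a b : Fin n, (a, b) ∈ C ∧ M a ℓ ≠ OSR.bot ∧ M k b ≠ OSR.bot ∧
      M ℓ k ≠ OSR.bot ∧ M k ℓ ≠ OSR.bot) → N ℓ k ≤ OSR.one) :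
    ∀ a b : Fin n, (a, b) ∈ C → mflat N a b ≤ OSR.one := by
  intro a b hab
  show omul (obar N) (omul (mangle (omul N (omul N N))) (obar N)) a b ≤ OSR.one
  rw [hbar]
  apply omul_le_one
  intro ℓ
  by_cases hal : M a ℓ = OSR.bot
  · rw [hal, OSR.bot_add]; exact OSR.bot_le' _
  · apply OSR.add_le_one (entry_le_one hMbar a ℓ)
    apply omul_le_one
    intro k
    by_cases hkb : M k b = OSR.bot
    · rw [hkb, OSR.add_bot]; exact OSR.bot_le' _
    · apply OSR.add_le_one ?_ (entry_le_one hMbar k b)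
      by_cases hlk : ℓ = k
      · subst hlk
        rw [show mangle (omul N (omul N N)) ℓ ℓ = omul N (omul N N) ℓ ℓ by simp [mangle]]
        apply osum_le
        intro u
        by_cases hlu : N ℓ u = OSR.bot
        · rw [hlu, OSR.bot_add]; exact OSR.bot_le' _
        · have hMlu : M ℓ u ≠ OSR.bot := (ne_bot_iff hbar ℓ u).mp hlu
          by_cases hNN : omul N N u ℓ = OSR.bot
          · rw [hNN, OSR.add_bot]; exact OSR.bot_le' _
          · obtain ⟨v, huv, hvl⟩ := omul_ne_bot_exists hNN
            have hMuv : M u v ≠ OSR.bot := (ne_bot_iff hbar u v).mp huv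
            have hMvl : M v ℓ ≠ OSR.bot := (ne_bot_iff hbar v ℓ).mp hvl
            have hMub : M u b ≠ OSR.bot := trans_ne_bot hMM hMuv (trans_ne_bot hMM hMvl hkb)
            have hMul : M u ℓ ≠ OSR.bot := trans_ne_bot hMM hMuv hMvl
            apply OSR.add_le_one (hb ℓ u ⟨a, b, hab, hal, hMub, hMlu, hMul⟩)
            apply osum_le
            intro v'
            by_cases huv' : N u v' = OSR.bot
            · rw [huv', OSR.bot_add]; exact OSR.bot_le' _
            · by_cases hv'l : N v' ℓ = OSR.bot
              · rw [hv'l, OSR.add_bot]; exact OSR.bot_le' _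
              · have hMuv' : M u v' ≠ OSR.bot := (ne_bot_iff hbar u v').mp huv'
                have hMv'l : M v' ℓ ≠ OSR.bot := (ne_bot_iff hbar v' ℓ).mp hv'l
                apply OSR.add_le_one
                · exact hb u v' ⟨a, b, hab, trans_ne_bot hMM hal hMlu,
                    trans_ne_bot hMM hMv'l hkb, hMuv', trans_ne_bot hMM hMv'l hMlu⟩
                · exact hb v' ℓ ⟨a, b, hab,
                    trans_ne_bot hMM (trans_ne_bot hMM hal hMlu) hMuv', hkb, hMv'l,
                    trans_ne_bot hMM hMlu hMuv'⟩
      · rw [show mangle (omul N (omul N N)) ℓ k = (omul N (omul N N) ℓ k).bar by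
          simp [mangle, hlk]]
        exact OSR.bar_le_one _

lemma prod_bound_left {N P M1 : Fin n → Fin n → OSR} {C C' : Set (Fin n × Fin n)}
    (hbar : obar N = M1) (hPbar : obar P = P)
    (hN : ∀ il ∈ C', N il.1 il.2 ≤ OSR.one)
    (hC' : ∀ a ℓ b : Fin n, (a, b) ∈ C → M1 a ℓ ≠ OSR.bot → P ℓ b ≠ OSR.bot →
      ((a, ℓ) : Fin n × Fin n) ∈ C') :
    ∀ a b : Fin n, (a, b) ∈ C → omul N P a b ≤ OSR.one := by
  intro a b hab
  apply omul_le_one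
  intro ℓ
  by_cases h1 : N a ℓ = OSR.bot
  · rw [h1, OSR.bot_add]; exact OSR.bot_le' _
  · by_cases h2 : P ℓ b = OSR.bot
    · rw [h2, OSR.add_bot]; exact OSR.bot_le' _
    · exact OSR.add_le_one
        (hN (a, ℓ) (hC' a ℓ b hab ((ne_bot_iff hbar a ℓ).mp h1) h2))
        (entry_le_one hPbar ℓ b)

lemma prod_bound_right {N P M2 : Fin n → Fin n → OSR} {C C' : Set (Fin n × Fin n)}
    (hbar : obar N = M2) (hPbar : obar P = P)
    (hN : ∀ lj ∈ C', N lj.1 lj.2 ≤ OSR.one)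
    (hC' : ∀ a ℓ b : Fin n, (a, b) ∈ C → P a ℓ ≠ OSR.bot → M2 ℓ b ≠ OSR.bot →
      ((ℓ, b) : Fin n × Fin n) ∈ C') :
    ∀ a b : Fin n, (a, b) ∈ C → omul P N a b ≤ OSR.one := by
  intro a b hab
  apply omul_le_one
  intro ℓ
  by_cases h1 : P a ℓ = OSR.bot
  · rw [h1, OSR.bot_add]; exact OSR.bot_le' _
  · by_cases h2 : N ℓ b = OSR.bot
    · rw [h2, OSR.add_bot]; exact OSR.bot_le' _
    · exact OSR.add_le_one (entry_le_one hPbar a ℓ)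
        (hN (ℓ, b) (hC' a ℓ b hab h1 ((ne_bot_iff hbar ℓ b).mp h2)))

end BoundLemmas

section FinalHelpers

variable {QA : Type} {n : ℕ}

lemma OSR.add_eq_inf_right : ∀ {a b : OSR}, a ≤ OSR.one → OSR.add a b = OSR.inf →
    b = OSR.inf := by decide

lemma OSR.add_eq_inf_left : ∀ {a b : OSR}, b ≤ OSR.one → OSR.add a b = OSR.inf →
    a = OSR.inf := by decide

lemma OSR.inf_not_le_one : ¬ (OSR.inf ≤ OSR.one) := by decide

lemma barW_le_one (y : WithBot ℕ) : barW y ≤ OSR.one :=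
  OSR.le_one_of_bar (barW_bar y)

lemma WF_node_elim {lbl : Elem QA n} {cs : List (FT QA n)}
    (h : FT.WF (FT.node lbl cs)) :
    2 ≤ cs.length ∧ (∀ c ∈ cs, FT.WF c) ∧
    List.Chain' (fun a b => a.q = b.p) (cs.map FT.label) ∧
    (∀ h' t', cs.map FT.label = h' :: t' → lbl = t'.foldl eprod h') ∧
    (3 ≤ cs.length → lbl.p = lbl.q ∧ eprod lbl lbl = lbl ∧ ∀ c ∈ cs, FT.label c = lbl) := by
  cases h with
  | node _ _ a b c d e => exact ⟨a, b, c, d, e⟩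

lemma exists_three {α : Type*} {l : List α} (h : 3 ≤ l.length) :
    ∃ a b c l', l = a :: b :: c :: l' := by
  rcases l with _ | ⟨a, l⟩
  · simp at h
  rcases l with _ | ⟨b, l⟩
  · simp at h
  rcases l with _ | ⟨c, l⟩
  · simp at h
  exact ⟨a, b, c, l, rfl⟩

end FinalHelpers

/-- properties of the β-labelling along the path from a fault of maximal height
to the root: for every strict ancestor `ν_h` (`h ∈ {2,…,m}`) of the fault,
`bar(β(ν_h)) = α(ν_h)`, the `x`-component of `β(ν_h)` is `∞` and its matrix is at most `1` on
all contributors; in particular the β-label of the root is a witness of non-domination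
in `I_{A,B}`. -/
theorem beta_labelling_witness {Sigma QA : Type} [Fintype Sigma] [Fintype QA] [DecidableEq QA]
    {nB : ℕ} (A : MPA Sigma QA) (B : MPA Sigma (Fin nB))
    (hdet : A.Deterministic) (hB : ∀ v : List Sigma, B.func v ≠ ⊥)
    (w : List Sigma) (t : FT QA nB) (ht : IsFactTreeOn A B w t)
    (π : List ℕ) (hfault : IsFaultAt B t π)
    (hmax : ∀ π' : List ℕ, IsFaultAt B t π' → heightAt t π' ≤ heightAt t π) :
    (∀ σ τ : List ℕ, π = σ ++ τ → τ ≠ [] →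
      ∀ c : FT QA nB, FT.subtreeAt t σ = some c →
        ebar (beta c τ) = FT.label c ∧ (beta c τ).x = OSR.inf ∧
        ∀ ij ∈ contributors B t σ, (beta c τ).M ij.1 ij.2 ≤ OSR.one) ∧
    InAsympO A B (some (beta t π)) ∧ IsWitness A B (beta t π) := by
  obtain ⟨hwf, p0, q0, xs, hI, hF, hpl⟩ := ht
  have hGen : ∀ e ∈ FT.leaves t, IsGen A B e := PL_gen w p0 xs (FT.leaves t) q0 hpl
  have H : ∀ (σ : List ℕ) (c : FT QA nB), FT.subtreeAt t σ = some c →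
      FT.WF c ∧ GoodE (FT.label c) ∧ InPathsO A B (some (FT.label c)) := by
    intro σ c h
    have hwfc := subtree_wf hwf h
    obtain ⟨g1, g2, -, -⟩ := label_good hwfc (fun e he => hGen e (subtree_leaves h e he))
    exact ⟨hwfc, g1, g2⟩
  obtain ⟨σf, iF, hπ, lblf, csf, hsubf, hlen3, hipos, hilt, cf, hcf, hcfx, hcfM⟩ := hfault
  have hsubπ : FT.subtreeAt t π = some cf := by
    rw [hπ]; exact subtree_child hsubf hcf
  obtain ⟨hwfn, hGoodn, hPathn⟩ := H σf (FT.node lblf csf) hsubf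
  obtain ⟨-, hwfch, hchainf, hfoldf, hidf⟩ := WF_node_elim hwfn
  obtain ⟨hpqf, hprodf, hlabf⟩ := hidf hlen3
  have hlcf : FT.label cf = lblf := hlabf cf (List.mem_of_getElem? hcf)
  have hMbarf : obar lblf.M = lblf.M := hGoodn.2.2
  have hMMf : omul lblf.M lblf.M = lblf.M := congrArg Elem.M hprodf
  have hxf : lblf.x = OSR.one := by rw [← hlcf]; exact hcfx
  -- The main induction, going up from the fault.
  have main : ∀ (τ σ : List ℕ) (c : FT QA nB), π = σ ++ τ → τ ≠ [] →
      FT.subtreeAt t σ = some c →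
      (ebar (beta c τ) = FT.label c ∧ (beta c τ).x = OSR.inf ∧
        ∀ ij ∈ contributors B t σ, (beta c τ).M ij.1 ij.2 ≤ OSR.one) ∧
      InAsympO A B (some (beta c τ)) := by
    intro τ
    induction τ with
    | nil => intro σ c _ hne _; exact absurd rfl hne
    | cons i τ' ih =>
      intro σ c hπσ _ hsub
      cases τ' with
      | nil =>
        -- base case: c is the parent of the fault
        obtain ⟨h1, h2⟩ := List.append_inj' (hπσ.symm.trans hπ) rfl
        subst h1
        have hi : i = iF := by injection h2
        subst hi
        rw [hsubf] at hsub
        have hc : c = FT.node lblf csf := (Option.some.inj hsub).symm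
        subst hc
        have hbeta : beta (FT.node lblf csf) [i] = estab lblf := by
          rw [beta_singleton hcf, hlcf]
        rw [hbeta]
        have hCmid : contributors B t (σ ++ [i]) =
            contribStep csf (contributors B t σ) i := contributors_snoc hsubf hcf
        obtain ⟨c1, c2, c3, cs', rfl⟩ := exists_three hlen3
        have hl1 : FT.label c1 = lblf := hlabf c1 (by simp)
        have hi0 : i ≠ 0 := by omega
        have hil : i ≠ (c1 :: c2 :: c3 :: cs').length - 1 := by
          simp only [List.length_cons] at hilt ⊢; omega
        have hstep : contribStep (c1 :: c2 :: c3 :: cs') (contributors B t σ) i =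
            {lk : Fin nB × Fin nB | ∃ a b, (a, b) ∈ contributors B t σ ∧
              lblf.M a lk.1 ≠ OSR.bot ∧ lblf.M lk.2 b ≠ OSR.bot ∧
              lblf.M lk.1 lk.2 ≠ OSR.bot ∧ lblf.M lk.2 lk.1 ≠ OSR.bot} := by
          simp only [contribStep, if_neg hi0, if_neg hil, hl1]
        have hz : ∀ ℓ k : Fin nB, (∃ a b, (a, b) ∈ contributors B t σ ∧
            lblf.M a ℓ ≠ OSR.bot ∧ lblf.M k b ≠ OSR.bot ∧
            lblf.M ℓ k ≠ OSR.bot ∧ lblf.M k ℓ ≠ OSR.bot) → lblf.M ℓ k = OSR.zero := by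
          intro ℓ k hmem
          have := hcfM (ℓ, k) (by rw [hπ, hCmid, hstep]; exact hmem)
          rwa [hlcf] at this
        refine ⟨⟨?_, ?_, ?_⟩, ?_⟩
        · show Elem.mk lblf.p lblf.x.sharp.bar lblf.p (obar (mstab lblf.M)) = _
          rw [obar_mstab hMbarf hMMf, hxf]
          show Elem.mk lblf.p OSR.one lblf.p lblf.M = lblf
          conv_rhs => rw [show lblf = ⟨lblf.p, lblf.x, lblf.q, lblf.M⟩ from rfl]
          rw [hxf, ← hpqf]
        · show lblf.x.sharp = OSR.inf
          rw [hxf]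
          rfl
        · intro ij hij
          show mstab lblf.M ij.1 ij.2 ≤ OSR.one
          exact stab_bound hMbarf hz ij.1 ij.2 hij
        · exact InAsympO.stab lblf (inPaths_inAsymp hPathn)
            ⟨hpqf, by rw [hMbarf]; exact hMMf⟩
      | cons j τ'' =>
        -- inductive step
        have hsubc : FT.subtreeAt c (i :: j :: τ'') = some cf := by
          have h := subtreeAt_append σ (i :: j :: τ'') t
          rw [← hπσ, hsubπ, hsub] at h
          simpa using h.symm
        cases c with
        | leaf e =>
            rw [show FT.subtreeAt (FT.leaf e) (i :: j :: τ'') = none from rfl] at hsubc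
            cases hsubc
        | node lbl cs =>
          rw [show FT.subtreeAt (FT.node lbl cs) (i :: j :: τ'') =
              (cs[i]?).bind (fun c' => FT.subtreeAt c' (j :: τ'')) from rfl] at hsubc
          cases hcs : cs[i]? with
          | none => rw [hcs] at hsubc; cases hsubc
          | some cchild =>
            have hsub' : FT.subtreeAt t (σ ++ [i]) = some cchild := subtree_child hsub hcs
            have hπ' : π = (σ ++ [i]) ++ (j :: τ'') := by
              rw [hπσ, List.append_assoc]
              rfl
            obtain ⟨⟨hbar', hx', hbound'⟩, hasymp'⟩ :=
              ih (σ ++ [i]) cchild hπ' (by simp) hsub'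
            obtain ⟨hwfn', hGood', hPath'⟩ := H σ (FT.node lbl cs) hsub
            obtain ⟨hlen2, hwfch', hchain', hfold', hid'⟩ := WF_node_elim hwfn'
            have hCeq : contributors B t (σ ++ [i]) =
                contribStep cs (contributors B t σ) i := contributors_snoc hsub hcs
            by_cases h2 : cs.length = 2
            · -- binary node
              obtain ⟨c1, c2, rfl⟩ := List.length_eq_two.mp h2
              have hfold2 : lbl = eprod (FT.label c1) (FT.label c2) :=
                hfold' (FT.label c1) [FT.label c2] rfl
              have hch12 : (FT.label c1).q = (FT.label c2).p := by
                have hh := hchain'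
                rw [show ([c1, c2].map FT.label) = [FT.label c1, FT.label c2] from rfl] at hh
                exact (List.isChain_cons_cons.mp hh).1
              have hi2 : i < 2 := by
                have := (List.getElem?_eq_some_iff.mp hcs).1
                simpa using this
              have hg1 := H (σ ++ [0]) c1
                (subtree_child hsub (show ([c1, c2] : List (FT QA nB))[(0:ℕ)]? = some c1 from rfl))
              have hg2 := H (σ ++ [1]) c2
                (subtree_child hsub (show ([c1, c2] : List (FT QA nB))[(1:ℕ)]? = some c2 from rfl))
              rcases (by omega : i = 0 ∨ i = 1) with rfl | rfl
              · -- left child of a binary node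
                have hcc : cchild = c1 := by
                  rw [show ([c1, c2] : List (FT QA nB))[(0:ℕ)]? = some c1 from rfl] at hcs
                  exact (Option.some.inj hcs).symm
                subst hcc
                rw [beta_bin0]
                refine ⟨⟨?_, ?_, ?_⟩, ?_⟩
                · rw [ebar_eprod, hbar', (hg2.2.1).ebar_eq, ← hfold2]
                  rfl
                · show OSR.add (beta cchild (j :: τ'')).x (FT.label c2).x = OSR.inf
                  rw [hx']
                  exact OSR.add_inf_left hg2.2.1.2.1
                · intro ij hij
                  show omul (beta cchild (j :: τ'')).M (FT.label c2).M ij.1 ij.2 ≤ OSR.one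
                  refine prod_bound_left (congrArg Elem.M hbar') hg2.2.1.2.2 hbound'
                    ?_ ij.1 ij.2 hij
                  intro a ℓ b hab h1' h2'
                  rw [hCeq]
                  exact ⟨b, hab, h2', h1'⟩
                · refine inAsymp_eprod hasymp' (inPaths_inAsymp hg2.2.2) ?_
                  rw [show (beta cchild (j :: τ'')).q = (ebar (beta cchild (j :: τ''))).q
                    from rfl, hbar']
                  exact hch12
              · -- right child of a binary node
                have hcc : cchild = c2 := by
                  rw [show ([c1, c2] : List (FT QA nB))[(1:ℕ)]? = some c2 from rfl] at hcs
                  exact (Option.some.inj hcs).symm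
                subst hcc
                rw [beta_bin1]
                refine ⟨⟨?_, ?_, ?_⟩, ?_⟩
                · rw [ebar_eprod, hbar', (hg1.2.1).ebar_eq, ← hfold2]
                  rfl
                · show OSR.add (FT.label c1).x (beta cchild (j :: τ'')).x = OSR.inf
                  rw [hx']
                  exact OSR.add_inf_right hg1.2.1.2.1
                · intro ij hij
                  show omul (FT.label c1).M (beta cchild (j :: τ'')).M ij.1 ij.2 ≤ OSR.one
                  refine prod_bound_right (congrArg Elem.M hbar') hg1.2.1.2.2 hbound'
                    ?_ ij.1 ij.2 hij
                  intro a ℓ b hab h1' h2'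
                  rw [hCeq]
                  exact ⟨a, hab, h1', h2'⟩
                · refine inAsymp_eprod (inPaths_inAsymp hg1.2.2) hasymp' ?_
                  rw [show (beta cchild (j :: τ'')).p = (ebar (beta cchild (j :: τ''))).p
                    from rfl, hbar']
                  exact hch12
            · -- idempotent node (≥ 3 children)
              have hlen3' : 3 ≤ cs.length := by omega
              obtain ⟨hpq', hprod', hlab'⟩ := hid' hlen3'
              have hlcc : FT.label cchild = lbl := hlab' cchild (List.mem_of_getElem? hcs)
              have hMM' : omul lbl.M lbl.M = lbl.M := congrArg Elem.M hprod'
              have hMbar' : obar lbl.M = lbl.M := hGood'.2.2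
              have hGoodL : GoodE lbl := hGood'
              have hNbar : obar (beta cchild (j :: τ'')).M = lbl.M := by
                rw [show obar (beta cchild (j :: τ'')).M =
                  (ebar (beta cchild (j :: τ''))).M from rfl, hbar', hlcc]
              obtain ⟨c1, c2, c3, cs', rfl⟩ := exists_three hlen3'
              have hl1 : FT.label c1 = lbl := hlab' c1 List.mem_cons_self
              by_cases hi0 : i = 0
              · -- left-most child of an idempotent node
                subst hi0
                rw [beta_left hcs h2 rfl]
                have hstep : contribStep (c1 :: c2 :: c3 :: cs') (contributors B t σ) 0 =
                    {il : Fin nB × Fin nB | ∃ j', (il.1, j') ∈ contributors B t σ ∧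
                      lbl.M il.2 j' ≠ OSR.bot ∧ lbl.M il.1 il.2 ≠ OSR.bot} := by
                  simp [contribStep, hl1]
                refine ⟨⟨?_, ?_, ?_⟩, ?_⟩
                · rw [ebar_eprod, hbar', hlcc, hGoodL.ebar_eq, hprod']
                  rfl
                · show OSR.add (beta cchild (j :: τ'')).x (FT.label cchild).x = OSR.inf
                  rw [hx', hlcc]
                  exact OSR.add_inf_left hGoodL.2.1
                · intro ij hij
                  show omul (beta cchild (j :: τ'')).M (FT.label cchild).M ij.1 ij.2 ≤ OSR.one
                  rw [hlcc]
                  refine prod_bound_left hNbar hMbar' hbound' ?_ ij.1 ij.2 hij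
                  intro a ℓ b hab h1' h2'
                  rw [hCeq, hstep]
                  exact ⟨b, hab, h2', h1'⟩
                · refine inAsymp_eprod hasymp' (inPaths_inAsymp (H (σ ++ [0]) cchild hsub').2.2) ?_
                  rw [show (beta cchild (j :: τ'')).q = (ebar (beta cchild (j :: τ''))).q
                    from rfl, hbar', hlcc, ← hpq', ← hlcc]
              · by_cases hil : i = (c1 :: c2 :: c3 :: cs').length - 1
                · -- right-most child of an idempotent node
                  rw [beta_right hcs h2 hi0 hil]
                  have hstep : contribStep (c1 :: c2 :: c3 :: cs') (contributors B t σ) i =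
                      {lj : Fin nB × Fin nB | ∃ a, (a, lj.2) ∈ contributors B t σ ∧
                        lbl.M a lj.1 ≠ OSR.bot ∧ lbl.M lj.1 lj.2 ≠ OSR.bot} := by
                    simp only [contribStep, if_neg hi0, if_pos hil, hl1]
                  refine ⟨⟨?_, ?_, ?_⟩, ?_⟩
                  · rw [ebar_eprod, hbar', hlcc, hGoodL.ebar_eq, hprod']
                    rfl
                  · show OSR.add (FT.label cchild).x (beta cchild (j :: τ'')).x = OSR.inf
                    rw [hx', hlcc]
                    exact OSR.add_inf_right hGoodL.2.1
                  · intro ij hij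
                    show omul (FT.label cchild).M (beta cchild (j :: τ'')).M ij.1 ij.2 ≤ OSR.one
                    rw [hlcc]
                    refine prod_bound_right hNbar hMbar' hbound' ?_ ij.1 ij.2 hij
                    intro a ℓ b hab h1' h2'
                    rw [hCeq, hstep]
                    exact ⟨a, hab, h1', h2'⟩
                  · refine inAsymp_eprod (inPaths_inAsymp (H (σ ++ [i]) cchild hsub').2.2)
                      hasymp' ?_
                    rw [show (beta cchild (j :: τ'')).p = (ebar (beta cchild (j :: τ''))).p
                      from rfl, hbar', hlcc, ← hpq', ← hlcc]
                · -- middle child of an idempotent node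
                  rw [beta_mid hcs h2 hi0 hil]
                  have hstep : contribStep (c1 :: c2 :: c3 :: cs') (contributors B t σ) i =
                      {lk : Fin nB × Fin nB | ∃ a b, (a, b) ∈ contributors B t σ ∧
                        lbl.M a lk.1 ≠ OSR.bot ∧ lbl.M lk.2 b ≠ OSR.bot ∧
                        lbl.M lk.1 lk.2 ≠ OSR.bot ∧ lbl.M lk.2 lk.1 ≠ OSR.bot} := by
                    simp only [contribStep, if_neg hi0, if_neg hil, hl1]
                  refine ⟨⟨?_, ?_, ?_⟩, ?_⟩
                  · show Elem.mk (beta cchild (j :: τ'')).p (beta cchild (j :: τ'')).x.bar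
                      (beta cchild (j :: τ'')).p (obar (mflat (beta cchild (j :: τ'')).M)) = _
                    rw [obar_mflat' hNbar hMM']
                    rw [show (beta cchild (j :: τ'')).p = (ebar (beta cchild (j :: τ''))).p
                      from rfl, show (beta cchild (j :: τ'')).x.bar =
                      (ebar (beta cchild (j :: τ''))).x from rfl, hbar', hlcc]
                    show Elem.mk lbl.p lbl.x lbl.p lbl.M = lbl
                    conv_rhs => rw [show lbl = ⟨lbl.p, lbl.x, lbl.q, lbl.M⟩ from rfl]
                    rw [← hpq']
                  · exact hx'
                  · intro ij hij
                    show mflat (beta cchild (j :: τ'')).M ij.1 ij.2 ≤ OSR.one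
                    refine flat_bound hNbar hMbar' hMM' ?_ ij.1 ij.2 hij
                    intro ℓ k hm
                    exact hbound' (ℓ, k) (by rw [hCeq, hstep]; exact hm)
                  · refine InAsympO.flat _ hasymp' ?_
                    constructor
                    · rw [show (beta cchild (j :: τ'')).p = (ebar (beta cchild (j :: τ''))).p
                        from rfl, show (beta cchild (j :: τ'')).q =
                        (ebar (beta cchild (j :: τ''))).q from rfl, hbar', hlcc]
                      exact hpq'
                    · rw [hNbar]
                      exact hMM'
  -- Assemble the statement.
  have hπne : π ≠ [] := by rw [hπ]; simp
  obtain ⟨⟨hroot, hxroot, hbroot⟩, hasymp⟩ := main π [] t rfl hπne rfl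
  refine ⟨?_, hasymp, ?_⟩
  · intro σ τ hστ hτne c hc
    exact (main τ σ c hστ hτne hc).1
  · -- the witness property
    obtain ⟨hGt, hPt, ⟨eh, heh1, heh2⟩, ⟨el, hel1, hel2⟩⟩ := label_good hwf hGen
    have hp0 : (FT.label t).p = p0 := by
      rw [heh2]; exact PL_head w p0 xs (FT.leaves t) q0 hpl eh heh1
    have hq0 : (FT.label t).q = q0 := by
      rw [hel2]; exact PL_last w p0 xs (FT.leaves t) hpl el hel1
    have hMroot : obar (beta t π).M = (FT.label t).M := congrArg Elem.M hroot
    refine ⟨?_, ?_, hxroot, ?_⟩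
    · rw [show (beta t π).p = (ebar (beta t π)).p from rfl, hroot, hp0]
      exact hI
    · rw [show (beta t π).q = (ebar (beta t π)).q from rfl, hroot, hq0]
      exact hF
    · intro hcon
      rcases osum_spec (fun i => osum fun j => OSR.add (barW (B.I i))
          (OSR.add ((beta t π).M i j) (barW (B.F j)))) with h0 | ⟨i, hi⟩
      · rw [hcon] at h0; cases h0
      · rw [hcon] at hi
        rcases osum_spec (fun j => OSR.add (barW (B.I i))
            (OSR.add ((beta t π).M i j) (barW (B.F j)))) with h0 | ⟨j, hj⟩
        · rw [← hi] at h0; cases h0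
        · have hterm : OSR.add (barW (B.I i))
              (OSR.add ((beta t π).M i j) (barW (B.F j))) = OSR.inf := by
            rw [← hj, ← hi]
          have hIb : barW (B.I i) ≠ OSR.bot := (OSR.add_eq_inf hterm).1
          have hrest : OSR.add ((beta t π).M i j) (barW (B.F j)) = OSR.inf :=
            OSR.add_eq_inf_right (barW_le_one _) hterm
          have hFb : barW (B.F j) ≠ OSR.bot := (OSR.add_eq_inf hrest).2
          have hMinf : (beta t π).M i j = OSR.inf :=
            OSR.add_eq_inf_left (barW_le_one _) hrest
          have hmem : ((i, j) : Fin nB × Fin nB) ∈ contributors B t [] := by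
            rw [show contributors B t [] = rootContrib B t from contribAt_nil t _]
            exact ⟨barW_ne_bot.mp hIb, barW_ne_bot.mp hFb,
              (ne_bot_iff hMroot i j).mp (by rw [hMinf]; simp)⟩
          have := hbroot (i, j) hmem
          rw [hMinf] at this
          exact OSR.inf_not_le_one this
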